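/- Let k be a field and d a positive integer. For every ideal I of the polynomial ring k[X_1,…,X_d] there exist d+1 elements f_1,…,f_{d+1} ∈ I such that the radical of the ideal generated by f_1,…,f_{d+1} equals the radical of I. -/

import Mathlib

open MvPolynomial

lemma aeval_finSuccEquiv {k R : Type*} [CommRing k] [CommRing R] [Algebra k R]
    {n : ℕ} (x : Fin (n+1) → R) (Q : MvPolynomial (Fin (n+1)) k) :
    MvPolynomial.aeval x Q =
      Polynomial.eval₂ (MvPolynomial.aeval (R := k) (x ∘ Fin.succ)).toRingHom (x 0)
        (MvPolynomial.finSuccEquiv k n Q) := by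
  have h : (MvPolynomial.aeval x).toRingHom =
      (Polynomial.eval₂RingHom (MvPolynomial.aeval (R := k) (x ∘ Fin.succ)).toRingHom (x 0)).comp
        (MvPolynomial.finSuccEquiv k n).toAlgHom.toRingHom := by
    apply MvPolynomial.ringHom_ext
    · intro a
      have : (MvPolynomial.finSuccEquiv k n) (C a) = Polynomial.C (C a) := by
        simp [MvPolynomial.finSuccEquiv_apply]
      simp [this]
    · intro i
      refine Fin.cases ?_ ?_ i
      · simp [MvPolynomial.finSuccEquiv_X_zero]
      · intro j
        simp [MvPolynomial.finSuccEquiv_X_succ]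
  have := RingHom.congr_fun h Q
  simpa using this

lemma chain_vanish {k R : Type*} [Field k] [CommRing R] [Algebra k R] :
    ∀ (n : ℕ) (P : Fin (n+1) → Ideal R), (∀ i, (P i).IsPrime) → Monotone P →
      ∀ (x : Fin n → R), (∀ i : Fin n, x i ∈ P i.succ) → (∀ i : Fin n, x i ∉ P i.castSucc) →
      ∀ Q : MvPolynomial (Fin n) k, MvPolynomial.aeval x Q ∈ P 0 → Q = 0 := by
  intro n
  induction n with
  | zero =>
    intro P hP hmono x hx hx' Q hQ
    obtain ⟨c, rfl⟩ : ∃ c, Q = C c := ⟨Q.coeff 0, (MvPolynomial.eq_C_of_isEmpty Q)⟩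
    rcases eq_or_ne c 0 with rfl | hc
    · simp
    · exfalso
      have : IsUnit (MvPolynomial.aeval (R := k) x (C c)) := by
        rw [MvPolynomial.aeval_C]
        exact (isUnit_iff_ne_zero.mpr hc).map (algebraMap k R)
      exact (hP 0).ne_top (Ideal.eq_top_of_isUnit_mem _ hQ this)
  | succ n ih =>
    intro P hP hmono x hx hx' Q hQ
    have hx0 : x 0 ∉ P 0 := by
      have := hx' 0
      simpa using this
    have hx1 : x 0 ∈ P 1 := by
      have := hx 0
      simpa using this
    have key : ∀ (N : ℕ) (q : Polynomial (MvPolynomial (Fin n) k)), q.natDegree ≤ N →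
        Polynomial.eval₂ (MvPolynomial.aeval (R := k) (x ∘ Fin.succ)).toRingHom (x 0) q ∈ P 0 →
        q = 0 := by
      intro N
      induction N with
      | zero =>
        intro q hdeg hmem
        obtain ⟨c, rfl⟩ := Polynomial.natDegree_eq_zero.mp (Nat.le_zero.mp hdeg)
        have hc : MvPolynomial.aeval (R := k) (x ∘ Fin.succ) c ∈ P 1 := by
          simpa using (hmono (by norm_num : (0 : Fin (n+2)) ≤ 1) hmem)
        have : c = 0 := by
          refine ih (P ∘ Fin.succ) (fun i => hP _) (fun a b hab => hmono (Fin.succ_le_succ_iff.mpr hab))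
            (x ∘ Fin.succ) (fun i => ?_) (fun i => ?_) c ?_
          · have := hx i.succ
            simpa [Fin.succ_castSucc] using this
          · have := hx' i.succ
            simpa only [Function.comp_apply, Fin.succ_castSucc] using this
          · simpa using hc
        simp [this]
      | succ N ihN =>
        intro q hdeg hmem
        rcases eq_or_ne q 0 with rfl | hq0
        · rfl
        -- split q = C (coeff 0) + X * divX q
        have hsplit : Polynomial.eval₂ (MvPolynomial.aeval (R := k) (x ∘ Fin.succ)).toRingHom (x 0) q
            = (MvPolynomial.aeval (R := k) (x ∘ Fin.succ)) (q.coeff 0)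
              + x 0 * Polynomial.eval₂ (MvPolynomial.aeval (R := k) (x ∘ Fin.succ)).toRingHom (x 0) q.divX := by
          conv_lhs => rw [← Polynomial.X_mul_divX_add q]
          rw [Polynomial.eval₂_add, Polynomial.eval₂_mul, Polynomial.eval₂_X, Polynomial.eval₂_C]
          simp only [AlgHom.coe_toRingHom, AlgHom.toRingHom_eq_coe, RingHom.coe_coe]
          ring
        have hc1 : (MvPolynomial.aeval (R := k) (x ∘ Fin.succ)) (q.coeff 0) ∈ P 1 := by
          have h01 : P 0 ≤ P 1 := hmono (by norm_num)
          have : (MvPolynomial.aeval (R := k) (x ∘ Fin.succ)) (q.coeff 0)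
              = Polynomial.eval₂ (MvPolynomial.aeval (R := k) (x ∘ Fin.succ)).toRingHom (x 0) q
                - x 0 * Polynomial.eval₂ (MvPolynomial.aeval (R := k) (x ∘ Fin.succ)).toRingHom (x 0) q.divX := by
            rw [hsplit]; ring
          rw [this]
          exact Ideal.sub_mem _ (h01 hmem) (Ideal.mul_mem_right _ _ hx1)
        have hc0 : q.coeff 0 = 0 := by
          refine ih (P ∘ Fin.succ) (fun i => hP _) (fun a b hab => hmono (Fin.succ_le_succ_iff.mpr hab))
            (x ∘ Fin.succ) (fun i => ?_) (fun i => ?_) _ ?_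
          · have := hx i.succ
            simpa [Fin.succ_castSucc] using this
          · have := hx' i.succ
            simpa only [Function.comp_apply, Fin.succ_castSucc] using this
          · simpa using hc1
        have hdivX : q.divX = 0 := by
          refine ihN q.divX ?_ ?_
          · have := Polynomial.natDegree_divX_eq_natDegree_tsub_one (p := q)
            omega
          · rw [hsplit, hc0, map_zero, zero_add] at hmem
            exact ((hP 0).mem_or_mem hmem).resolve_left hx0
        have := Polynomial.X_mul_divX_add q
        rw [hdivX, hc0] at this
        simpa using this.symm
    have hQ' : Polynomial.eval₂ (MvPolynomial.aeval (R := k) (x ∘ Fin.succ)).toRingHom (x 0)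
        (MvPolynomial.finSuccEquiv k n Q) ∈ P 0 := by
      rw [← aeval_finSuccEquiv]
      exact hQ
    have := key _ _ le_rfl hQ'
    exact (MvPolynomial.finSuccEquiv k n).injective (by simpa using this)


open MvPolynomial

lemma totalDegree_le_span {k : Type*} [Field k] {d M : ℕ}
    (p : MvPolynomial (Fin d) k) (hp : p.totalDegree ≤ M) :
    p ∈ Submodule.span k (Set.range (fun γ : Fin d → Fin (M+1) =>
      (MvPolynomial.monomial (Finsupp.equivFunOnFinite.symm (fun i => (γ i : ℕ))) (1 : k)
        : MvPolynomial (Fin d) k))) := by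
  nth_rewrite 1 [p.as_sum]
  refine Submodule.sum_mem _ (fun s hs => ?_)
  have hsM : ∀ i, s i ≤ M := by
    intro i
    rcases eq_or_ne (s i) 0 with h | h
    · omega
    · calc s i ≤ s.sum fun _ e => e :=
            Finset.single_le_sum (fun _ _ => Nat.zero_le _) (Finsupp.mem_support_iff.mpr h)
        _ ≤ p.totalDegree := MvPolynomial.le_totalDegree hs
        _ ≤ M := hp
  have : (MvPolynomial.monomial s (coeff s p) : MvPolynomial (Fin d) k)
      = coeff s p • (MvPolynomial.monomial (Finsupp.equivFunOnFinite.symm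
          (fun i => ((⟨s i, Nat.lt_succ_of_le (hsM i)⟩ : Fin (M+1)) : ℕ))) (1 : k)) := by
    rw [MvPolynomial.smul_monomial]
    congr 1
    · ext i
      simp
    · simp
  rw [this]
  exact Submodule.smul_mem _ _ (Submodule.subset_span ⟨_, rfl⟩)

lemma not_algebraicIndependent {k : Type*} [Field k] (d : ℕ)
    (x : Fin (d+1) → MvPolynomial (Fin d) k) :
    ¬ AlgebraicIndependent k x := by
  classical
  intro hx
  set D : ℕ := Finset.univ.sup (fun i => (x i).totalDegree) with hD
  set N : ℕ := ((d+1)*D+1)^d with hN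
  set M : ℕ := (d+1)*(N*D) with hM
  -- the family of products
  set y : (Fin (d+1) → Fin (N+1)) → MvPolynomial (Fin d) k :=
    fun β => ∏ i, x i ^ (β i : ℕ) with hy
  -- linear independence of y
  have hli : LinearIndependent k y := by
    have hinj : Function.Injective
        (fun β : Fin (d+1) → Fin (N+1) =>
          Finsupp.equivFunOnFinite.symm (fun i => (β i : ℕ)) : _ → (Fin (d+1) →₀ ℕ)) := by
      intro a b hab
      have h' := Finsupp.equivFunOnFinite.symm.injective hab
      funext i
      exact Fin.val_injective (congrFun h' i)
    have h1 : LinearIndependent k (fun β : Fin (d+1) → Fin (N+1) =>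
        (MvPolynomial.monomial (Finsupp.equivFunOnFinite.symm (fun i => (β i : ℕ))) (1 : k)
          : MvPolynomial (Fin (d+1)) k)) :=
      (MvPolynomial.basisMonomials (Fin (d+1)) k).linearIndependent.comp _ hinj
    have h2 := h1.map' (MvPolynomial.aeval x).toLinearMap
      (LinearMap.ker_eq_bot.mpr hx)
    convert h2 using 1
    funext β
    simp only [Function.comp_apply, AlgHom.toLinearMap_apply, MvPolynomial.aeval_monomial, map_one,
      one_mul]
    rw [Finsupp.prod_pow]
    simp [hy]
    all_goals rfl
  -- membership in span of monomials of degree ≤ M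
  have hmem : Set.range y ≤ Submodule.span k (Set.range (fun γ : Fin d → Fin (M+1) =>
      (MvPolynomial.monomial (Finsupp.equivFunOnFinite.symm (fun i => (γ i : ℕ))) (1 : k)
        : MvPolynomial (Fin d) k))) := by
    rintro _ ⟨β, rfl⟩
    refine totalDegree_le_span _ ?_
    calc (∏ i, x i ^ (β i : ℕ)).totalDegree
        ≤ ∑ i, (x i ^ (β i : ℕ)).totalDegree := MvPolynomial.totalDegree_finset_prod _ _
      _ ≤ ∑ _i : Fin (d+1), N * D := by
          refine Finset.sum_le_sum (fun i _ => ?_)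
          calc (x i ^ (β i : ℕ)).totalDegree ≤ (β i : ℕ) * (x i).totalDegree :=
                MvPolynomial.totalDegree_pow _ _
            _ ≤ N * D := by
                refine Nat.mul_le_mul ?_ ?_
                · exact Nat.lt_succ_iff.mp (β i).isLt
                · rw [hD]
                  exact Finset.le_sup (f := fun i => (x i).totalDegree) (Finset.mem_univ i)
      _ = M := by simp [hM, Finset.sum_const, mul_comm]
  -- cardinality bound
  have hcard := linearIndependent_le_span' y hli _ hmem
  rw [Cardinal.mk_fintype] at hcard
  have hcard2 : Fintype.card (Fin (d+1) → Fin (N+1)) ≤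
      Fintype.card (Fin d → Fin (M+1)) := by
    have := Fintype.card_range_le (fun γ : Fin d → Fin (M+1) =>
      (MvPolynomial.monomial (Finsupp.equivFunOnFinite.symm (fun i => (γ i : ℕ))) (1 : k)
        : MvPolynomial (Fin d) k))
    exact_mod_cast hcard.trans (Nat.cast_le.mpr this)
  simp only [Fintype.card_fun, Fintype.card_fin] at hcard2
  -- numeric contradiction
  have key : (M+1)^d < (N+1)^(d+1) := by
    have h1 : M + 1 ≤ ((d+1)*D+1) * (N+1) := by
      have : ((d+1)*D+1) * (N+1) = (d+1)*(N*D) + ((d+1)*D + N + 1) := by ring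
      omega
    calc (M+1)^d ≤ (((d+1)*D+1) * (N+1))^d := Nat.pow_le_pow_left h1 d
      _ = N * (N+1)^d := by rw [mul_pow, hN]
      _ < (N+1) * (N+1)^d := by
          have : 0 < (N+1)^d := pow_pos (Nat.succ_pos N) _
          exact Nat.mul_lt_mul_of_lt_of_le (Nat.lt_succ_self N) le_rfl this
      _ = (N+1)^(d+1) := by ring
  omega


lemma minimalPrimes_finite {R : Type*} [CommRing R] [IsNoetherianRing R] (J : Ideal R) :
    J.minimalPrimes.Finite := by
  rw [Ideal.minimalPrimes_eq_comap]
  exact (minimalPrimes.finite_of_isNoetherianRing (R ⧸ J)).image _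

lemma kronecker_construction {R : Type*} [CommRing R] [IsNoetherianRing R] (I : Ideal R) :
    ∀ r : ℕ, ∃ f : Fin r → R, (∀ i, f i ∈ I) ∧
      ∀ P ∈ (Ideal.span (Set.range f)).minimalPrimes, I ≤ P ∨
        ∃ c : Fin (r+1) → Ideal R, (∀ i, (c i).IsPrime) ∧ StrictMono c ∧ c (Fin.last r) = P := by
  intro r
  induction r with
  | zero =>
    refine ⟨Fin.elim0, fun i => i.elim0, fun P hP => Or.inr ⟨fun _ => P, fun _ => hP.1.1, ?_, rfl⟩⟩
    intro a b h
    exact absurd (Fin.ext (by omega)) (ne_of_lt h)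
  | succ r ih =>
    classical
    obtain ⟨f, hfI, hf⟩ := ih
    set J := Ideal.span (Set.range f) with hJ
    set S : Set (Ideal R) := {P | P ∈ J.minimalPrimes ∧ ¬ I ≤ P} with hS
    have hSfin : S.Finite := (minimalPrimes_finite J).subset (fun P hP => hP.1)
    -- choose g ∈ I avoiding all primes in S
    have hg : ∃ g ∈ I, ∀ P ∈ S, g ∉ P := by
      rcases S.eq_empty_or_nonempty with h | h
      · exact ⟨0, I.zero_mem, fun P hP => by simp [h] at hP⟩
      · by_contra hcon
        push_neg at hcon
        have hsub : (I : Set R) ⊆ ⋃ P ∈ hSfin.toFinset, (id P : Ideal R) := by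
          intro a ha
          obtain ⟨P, hP, haP⟩ := hcon a ha
          exact Set.mem_biUnion (hSfin.mem_toFinset.mpr hP) haP
        have := (Ideal.subset_union_prime (⊥ : Ideal R) (⊥ : Ideal R)
          (f := id) (s := hSfin.toFinset) ?_).mp hsub
        · obtain ⟨P, hPS, hIP⟩ := this
          exact ((hSfin.mem_toFinset.mp hPS).2) hIP
        · intro P hP _ _
          exact ((hSfin.mem_toFinset.mp hP).1).1.1
    obtain ⟨g, hgI, hgS⟩ := hg
    refine ⟨Fin.snoc f g, ?_, ?_⟩
    · intro i
      refine Fin.lastCases ?_ ?_ i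
      · simpa using hgI
      · intro j
        simpa using hfI j
    · intro Q hQ
      by_cases hIQ : I ≤ Q
      · exact Or.inl hIQ
      right
      have hQprime : Q.IsPrime := hQ.1.1
      have hJQ : J ≤ Q := by
        refine le_trans ?_ hQ.1.2
        rw [hJ]
        refine Ideal.span_mono ?_
        rintro _ ⟨i, rfl⟩
        exact ⟨i.castSucc, Fin.snoc_castSucc _ _ _⟩
      have hgQ : g ∈ Q := by
        refine hQ.1.2 ?_
        refine Ideal.subset_span ⟨Fin.last r, ?_⟩
        simp
      obtain ⟨P, hPmin, hPQ⟩ := Ideal.exists_minimalPrimes_le hJQ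
      have hIP : ¬ I ≤ P := fun h => hIQ (h.trans hPQ)
      have hPS : P ∈ S := ⟨hPmin, hIP⟩
      obtain ⟨c, hcprime, hcmono, hclast⟩ := (hf P hPmin).resolve_left hIP
      have hPltQ : P < Q := lt_of_le_of_ne hPQ (fun h => hgS P hPS (h ▸ hgQ))
      refine ⟨Fin.snoc c Q, ?_, ?_, ?_⟩
      · intro i
        refine Fin.lastCases ?_ ?_ i
        · simpa using hQprime
        · intro j
          simpa using hcprime j
      · rw [Fin.strictMono_iff_lt_succ]
        intro i
        refine Fin.lastCases ?_ ?_ i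
        · rw [Fin.succ_last, Fin.snoc_last, Fin.snoc_castSucc, hclast]
          exact hPltQ
        · intro j
          rw [Fin.succ_castSucc, Fin.snoc_castSucc, Fin.snoc_castSucc]
          exact hcmono (Fin.castSucc_lt_succ : j.castSucc < j.succ)
      · simp

/-- **Kronecker's theorem (1882).** Every ideal of a polynomial ring in `d` variables
over a field is defined set-theoretically by `d + 1` elements. -/
theorem kronecker_set_theoretic (k : Type*) [Field k] (d : ℕ) (hd : 0 < d)
    (I : Ideal (MvPolynomial (Fin d) k)) :
    ∃ f : Fin (d + 1) → MvPolynomial (Fin d) k,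
      (∀ i, f i ∈ I) ∧ (Ideal.span (Set.range f)).radical = I.radical := by
  obtain ⟨f, hfI, hf⟩ := kronecker_construction I (d+1)
  refine ⟨f, hfI, ?_⟩
  set J := Ideal.span (Set.range f) with hJ
  have hall : ∀ P ∈ J.minimalPrimes, I ≤ P := by
    intro P hP
    rcases hf P hP with h | ⟨c, hcp, hcm, hcl⟩
    · exact h
    exfalso
    have hx : ∀ i : Fin (d+1), ∃ z, z ∈ c i.succ ∧ z ∉ c i.castSucc := by
      intro i
      obtain ⟨z, hz1, hz2⟩ := SetLike.exists_of_lt (hcm (Fin.castSucc_lt_succ : i.castSucc < i.succ))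
      exact ⟨z, hz1, hz2⟩
    choose x hx1 hx2 using hx
    refine not_algebraicIndependent d x ?_
    rw [algebraicIndependent_iff]
    intro p hp
    exact chain_vanish (d+1) c hcp hcm.monotone x hx1 hx2 p
      (by rw [hp]; exact (c 0).zero_mem)
  have hIrad : I ≤ J.radical := by
    rw [← Ideal.sInf_minimalPrimes]
    exact le_sInf (fun P hP => hall P hP)
  have h1 : J.radical ≤ I.radical :=
    Ideal.radical_mono (Ideal.span_le.mpr (by rintro _ ⟨i, rfl⟩; exact hfI i))
  have h2 : I.radical ≤ J.radical := by
    calc I.radical ≤ J.radical.radical := Ideal.radical_mono hIrad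
      _ = J.radical := Ideal.radical_idem _
  exact le_antisymm h1 h2
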